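/- Let m, n be integers with 2 ≤ m ≤ n, and let T be any subset of S(m,n) (the set of the m + n unit rotations) with |T| ≤ m. Then the subgroup of the symmetric group on Fin m × Fin n generated by T does not act transitively on Fin m × Fin n; in particular, m unit rotation types do not suffice to sort every sortable m × n instance, so the m + 1 rotation types used by the sorting algorithm are optimal in number. -/

import Mathlib

/- Unit rightward rotation of row i of the m x n Torus Puzzle. -/
def rowRot (m n : ℕ) (i : Fin m) : Equiv.Perm (Fin m × Fin n) where
  toFun p := if p.1 = i then (i, finRotate n p.2) else p
  invFun p := if p.1 = i then (i, (finRotate n).symm p.2) else p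
  left_inv := by rintro ⟨a, b⟩; by_cases h : a = i <;> simp [h, -finRotate_apply, -finRotate_symm_apply]
  right_inv := by rintro ⟨a, b⟩; by_cases h : a = i <;> simp [h, -finRotate_apply, -finRotate_symm_apply]

/- Unit downward rotation of column j of the m x n Torus Puzzle. -/
def colRot (m n : ℕ) (j : Fin n) : Equiv.Perm (Fin m × Fin n) where
  toFun p := if p.2 = j then (finRotate m p.1, j) else p
  invFun p := if p.2 = j then ((finRotate m).symm p.1, j) else p
  left_inv := by rintro ⟨a, b⟩; by_cases h : b = j <;> simp [h, -finRotate_apply, -finRotate_symm_apply]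
  right_inv := by rintro ⟨a, b⟩; by_cases h : b = j <;> simp [h, -finRotate_apply, -finRotate_symm_apply]

/- The set S(m,n) of the m + n unit rotations. -/
def unitRotations (m n : ℕ) : Set (Equiv.Perm (Fin m × Fin n)) :=
  Set.range (rowRot m n) ∪ Set.range (colRot m n)

lemma rowRot_fst (m n : ℕ) (i : Fin m) (p : Fin m × Fin n) :
    ((rowRot m n i) p).1 = p.1 := by
  simp only [rowRot, Equiv.coe_fn_mk]
  split_ifs with h <;> simp [h]

lemma colRot_snd (m n : ℕ) (j : Fin n) (p : Fin m × Fin n) :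
    ((colRot m n j) p).2 = p.2 := by
  simp only [colRot, Equiv.coe_fn_mk]
  split_ifs with h <;> simp [h]

lemma rowRot_fix (m n : ℕ) (i : Fin m) (p : Fin m × Fin n) (h : p.1 ≠ i) :
    rowRot m n i p = p := by
  simp [rowRot, h]

lemma colRot_fix (m n : ℕ) (j : Fin n) (p : Fin m × Fin n) (h : p.2 ≠ j) :
    colRot m n j p = p := by
  simp [colRot, h]

lemma rowRot_injective (m n : ℕ) (hn : 2 ≤ n) : Function.Injective (rowRot m n) := by
  obtain ⟨k, rfl⟩ : ∃ k, n = k + 2 := ⟨n - 2, by omega⟩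
  intro i i' h
  by_contra hne
  have h1 := congrArg (fun e : Equiv.Perm (Fin m × Fin (k+2)) => e (i, 0)) h
  simp only [rowRot, Equiv.coe_fn_mk] at h1
  simp [hne, finRotate_succ_apply, Prod.ext_iff, Fin.ext_iff] at h1

lemma colRot_injective (m n : ℕ) (hm : 2 ≤ m) : Function.Injective (colRot m n) := by
  obtain ⟨k, rfl⟩ : ∃ k, m = k + 2 := ⟨m - 2, by omega⟩
  intro j j' h
  by_contra hne
  have h1 := congrArg (fun e : Equiv.Perm (Fin (k+2) × Fin n) => e (0, j)) h
  simp only [colRot, Equiv.coe_fn_mk] at h1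
  simp [hne, finRotate_succ_apply, Prod.ext_iff, Fin.ext_iff] at h1

/- No set of at most m unit rotations generates a group acting transitively on the
positions; hence m + 1 rotation types are necessary (and, by the algorithm, sufficient). -/
theorem m_rotation_types_not_transitive (m n : ℕ) (hm : 2 ≤ m) (hmn : m ≤ n)
    (T : Finset (Equiv.Perm (Fin m × Fin n)))
    (hT : ↑T ⊆ unitRotations m n) (hcard : T.card ≤ m) :
    ¬ ∀ p q : Fin m × Fin n,
        ∃ g ∈ Subgroup.closure (T : Set (Equiv.Perm (Fin m × Fin n))), g p = q := by
  intro htrans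
  have hn : 2 ≤ n := hm.trans hmn
  by_cases hR : ∀ i : Fin m, rowRot m n i ∈ T
  · -- T is exactly the set of all row rotations; fst is preserved
    have himg : (Finset.univ.image (rowRot m n)) = T := by
      apply Finset.eq_of_subset_of_card_le
      · intro t ht
        obtain ⟨i, _, rfl⟩ := Finset.mem_image.mp ht
        exact hR i
      · calc T.card ≤ m := hcard
          _ = (Finset.univ.image (rowRot m n)).card := by
            rw [Finset.card_image_of_injective _ (rowRot_injective m n hn)]
            simp
    have hfst : ∀ g ∈ Subgroup.closure (T : Set (Equiv.Perm (Fin m × Fin n))),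
        ∀ p : Fin m × Fin n, (g p).1 = p.1 := by
      intro g hg
      induction hg using Subgroup.closure_induction with
      | mem t ht =>
        have : t ∈ Finset.univ.image (rowRot m n) := himg ▸ ht
        obtain ⟨i, _, rfl⟩ := Finset.mem_image.mp this
        exact fun p => rowRot_fst m n i p
      | one => intro p; rfl
      | mul a b _ _ ha hb => intro p; rw [Equiv.Perm.mul_apply, ha, hb]
      | inv a _ ha =>
        intro p
        have := ha (a⁻¹ p)
        simpa using this.symm
    obtain ⟨g, hg, hgp⟩ := htrans (⟨0, by omega⟩, ⟨0, by omega⟩) (⟨1, by omega⟩, ⟨0, by omega⟩)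
    have := hfst g hg (⟨0, by omega⟩, ⟨0, by omega⟩)
    rw [hgp] at this
    simp [Fin.ext_iff] at this
  · by_cases hC : ∀ j : Fin n, colRot m n j ∈ T
    · -- all n column rotations in T, n ≥ m ≥ card T, so T exactly col rotations
      have himg : (Finset.univ.image (colRot m n)) = T := by
        apply Finset.eq_of_subset_of_card_le
        · intro t ht
          obtain ⟨j, _, rfl⟩ := Finset.mem_image.mp ht
          exact hC j
        · calc T.card ≤ m := hcard
            _ ≤ n := hmn
            _ = (Finset.univ.image (colRot m n)).card := by
              rw [Finset.card_image_of_injective _ (colRot_injective m n hm)]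
              simp
      have hsnd : ∀ g ∈ Subgroup.closure (T : Set (Equiv.Perm (Fin m × Fin n))),
          ∀ p : Fin m × Fin n, (g p).2 = p.2 := by
        intro g hg
        induction hg using Subgroup.closure_induction with
        | mem t ht =>
          have : t ∈ Finset.univ.image (colRot m n) := himg ▸ ht
          obtain ⟨j, _, rfl⟩ := Finset.mem_image.mp this
          exact fun p => colRot_snd m n j p
        | one => intro p; rfl
        | mul a b _ _ ha hb => intro p; rw [Equiv.Perm.mul_apply, ha, hb]
        | inv a _ ha =>
          intro p
          have := ha (a⁻¹ p)
          simpa using this.symm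
      obtain ⟨g, hg, hgp⟩ := htrans (⟨0, by omega⟩, ⟨0, by omega⟩) (⟨0, by omega⟩, ⟨1, by omega⟩)
      have := hsnd g hg (⟨0, by omega⟩, ⟨0, by omega⟩)
      rw [hgp] at this
      simp [Fin.ext_iff] at this
    · push_neg at hR hC
      obtain ⟨i₀, hi₀⟩ := hR
      obtain ⟨j₀, hj₀⟩ := hC
      obtain ⟨k, rfl⟩ : ∃ k, m = k + 2 := ⟨m - 2, by omega⟩
      have hfix : ∀ g ∈ Subgroup.closure (T : Set (Equiv.Perm (Fin (k+2) × Fin n))),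
          g (i₀, j₀) = (i₀, j₀) := by
        intro g hg
        induction hg using Subgroup.closure_induction with
        | mem t ht =>
          rcases hT ht with ⟨i, rfl⟩ | ⟨j, rfl⟩
          · exact rowRot_fix _ n i _ (fun h => hi₀ (by simpa [← h] using ht))
          · exact colRot_fix _ n j _ (fun h => hj₀ (by simpa [← h] using ht))
        | one => rfl
        | mul a b _ _ ha hb => rw [Equiv.Perm.mul_apply, hb, ha]
        | inv a _ ha =>
          have := congrArg (⇑a⁻¹) ha
          simpa using this.symm
      obtain ⟨g, hg, hgp⟩ := htrans (i₀, j₀) (i₀ + 1, j₀)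
      have := hfix g hg
      rw [hgp] at this
      have h1 : i₀ + 1 = i₀ := congrArg Prod.fst this
      have h2 : (1 : Fin (k+2)) = 0 := add_left_cancel (a := i₀) (by rw [add_zero]; exact h1)
      simp [Fin.ext_iff] at h2
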